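/- Let μ be a Λ-nice measure, i.e., μ(B(x,r)) ≤ Λ r^s for all balls. Let K be an s-dimensional CZ kernel and K_δ its regularization. Then there is a constant C_1 > 0, depending on s, d, α, ‖K‖_*, and Λ, such that for any δ > 0 and y, y' ∈ ℝ^d, | ∫_{ℝ^d} [K_δ(x−y) − K_δ(x−y')] dμ(x) | ≤ C_1 |y−y'|^α / δ^α. -/

import Mathlib

open Classical MeasureTheory Metric ENNReal

lemma stmt7_tail {E : Type*} [NormedAddCommGroup E] [MeasurableSpace E]
    (s α Λ : ℝ) (hs : 0 < s) (hα0 : 0 < α) (hΛ : 0 < Λ)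
    (μ : Measure E)
    (hμ : ∀ (x : E) (r : ℝ), 0 < r → μ (ball x r) ≤ ENNReal.ofReal (Λ * r ^ s))
    (y : E) (R : ℝ) (hR : 0 < R) :
    ∫⁻ x in {x | R ≤ ‖x - y‖}, ENNReal.ofReal (‖x - y‖ ^ (-(s + α))) ∂μ
      ≤ ENNReal.ofReal (Λ * 2 ^ s / (1 - 2 ^ (-α)) * R ^ (-α)) := by
  have hq0 : (0:ℝ) < 2 ^ (-α) := Real.rpow_pos_of_pos two_pos _
  have hq1 : (2:ℝ) ^ (-α) < 1 :=
    Real.rpow_lt_one_of_one_lt_of_neg one_lt_two (by linarith)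
  set S : ℕ → Set E := fun j => {x | 2 ^ j * R ≤ ‖x - y‖ ∧ ‖x - y‖ < 2 ^ (j + 1) * R} with hS
  have hsub : {x : E | R ≤ ‖x - y‖} ⊆ ⋃ j, S j := by
    intro x hx
    simp only [Set.mem_setOf_eq] at hx
    have hnx : 0 < ‖x - y‖ := lt_of_lt_of_le hR hx
    have hxR : (1:ℝ) ≤ ‖x - y‖ / R := (one_le_div hR).2 hx
    have hj0 : 0 ≤ Int.log 2 (‖x - y‖ / R) := by
      refine (Int.zpow_le_iff_le_log (by norm_num) (by positivity)).1 ?_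
      simpa using hxR
    refine Set.mem_iUnion.2 ⟨(Int.log 2 (‖x - y‖ / R)).toNat, ?_, ?_⟩
    · have h1 : ((2:ℝ)) ^ Int.log 2 (‖x - y‖ / R) ≤ ‖x - y‖ / R :=
        Int.zpow_log_le_self (by norm_num) (by positivity)
      rw [← Int.toNat_of_nonneg hj0, zpow_natCast] at h1
      calc (2:ℝ) ^ (Int.log 2 (‖x - y‖ / R)).toNat * R
          ≤ (‖x - y‖ / R) * R := by nlinarith
        _ = ‖x - y‖ := by field_simp
    · have h2 : ‖x - y‖ / R < ((2:ℝ)) ^ (Int.log 2 (‖x - y‖ / R) + 1) :=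
        Int.lt_zpow_succ_log_self (by norm_num) _
      have : ((2:ℝ)) ^ (Int.log 2 (‖x - y‖ / R) + 1)
          = (2:ℝ) ^ ((Int.log 2 (‖x - y‖ / R)).toNat + 1) := by
        rw [← zpow_natCast]
        congr 1
        omega
      rw [this] at h2
      calc ‖x - y‖ = (‖x - y‖ / R) * R := by field_simp
        _ < (2:ℝ) ^ ((Int.log 2 (‖x - y‖ / R)).toNat + 1) * R := by nlinarith
  calc ∫⁻ x in {x | R ≤ ‖x - y‖}, ENNReal.ofReal (‖x - y‖ ^ (-(s + α))) ∂μ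
      ≤ ∫⁻ x in ⋃ j, S j, ENNReal.ofReal (‖x - y‖ ^ (-(s + α))) ∂μ :=
        lintegral_mono_set hsub
    _ ≤ ∑' j, ∫⁻ x in S j, ENNReal.ofReal (‖x - y‖ ^ (-(s + α))) ∂μ :=
        lintegral_iUnion_le _ _
    _ ≤ ∑' j, ENNReal.ofReal ((Λ * 2 ^ s * R ^ (-α)) * ((2:ℝ) ^ (-α)) ^ j) := by
        refine ENNReal.tsum_le_tsum fun j => ?_
        have haR : (0:ℝ) < 2 ^ j * R := by positivity
        have step1 : ∫⁻ x in S j, ENNReal.ofReal (‖x - y‖ ^ (-(s + α))) ∂μ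
            ≤ ∫⁻ _ in S j, ENNReal.ofReal ((2 ^ j * R) ^ (-(s + α))) ∂μ := by
          refine setLIntegral_mono measurable_const fun x hx => ?_
          exact ENNReal.ofReal_le_ofReal
            (Real.rpow_le_rpow_of_nonpos haR hx.1 (by linarith))
        rw [setLIntegral_const] at step1
        have hball : μ (S j) ≤ ENNReal.ofReal (Λ * (2 ^ (j + 1) * R) ^ s) := by
          refine le_trans (measure_mono ?_) (hμ y (2 ^ (j + 1) * R) (by positivity))
          intro x hx
          rw [mem_ball, dist_eq_norm]
          exact hx.2
        have step2 : ENNReal.ofReal ((2 ^ j * R) ^ (-(s + α))) * μ (S j)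
            ≤ ENNReal.ofReal ((2 ^ j * R) ^ (-(s + α)) * (Λ * (2 ^ (j + 1) * R) ^ s)) := by
          rw [ENNReal.ofReal_mul (by positivity)]
          exact mul_le_mul_right hball _
        refine le_trans (le_trans step1 step2) (le_of_eq (congrArg _ ?_))
        have ha : (0:ℝ) < (2:ℝ) ^ j := by positivity
        have e1 : ((2:ℝ) ^ (j + 1) * R) ^ s = 2 ^ s * ((2:ℝ) ^ j * R) ^ s := by
          rw [pow_succ, mul_comm ((2:ℝ) ^ j) 2, mul_assoc,
            Real.mul_rpow (by norm_num) haR.le]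
        have e2 : ((2:ℝ) ^ j * R) ^ (-(s + α))
            = (((2:ℝ) ^ j * R) ^ s)⁻¹ * (((2:ℝ) ^ j) ^ (-α) * R ^ (-α)) := by
          rw [neg_add, Real.rpow_add haR, Real.rpow_neg haR.le]
          congr 1
          rw [Real.mul_rpow ha.le hR.le]
        have e3 : ((2:ℝ) ^ j) ^ (-α) = ((2:ℝ) ^ (-α)) ^ j := by
          rw [← Real.rpow_natCast ((2:ℝ) ^ (-α)) j, ← Real.rpow_natCast 2 j,
            ← Real.rpow_mul (by norm_num), ← Real.rpow_mul (by norm_num), mul_comm]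
        have hpow : (0:ℝ) < ((2:ℝ) ^ j * R) ^ s := Real.rpow_pos_of_pos haR _
        rw [e1, e2, e3]
        field_simp
        try ring
    _ = ENNReal.ofReal (Λ * 2 ^ s / (1 - 2 ^ (-α)) * R ^ (-α)) := by
        have hC : (0:ℝ) ≤ Λ * 2 ^ s * R ^ (-α) := by positivity
        simp_rw [ENNReal.ofReal_mul hC, ENNReal.ofReal_pow hq0.le]
        rw [ENNReal.tsum_mul_left, ENNReal.tsum_geometric]
        have : (1 : ℝ≥0∞) - ENNReal.ofReal ((2:ℝ) ^ (-α)) = ENNReal.ofReal (1 - 2 ^ (-α)) := by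
          rw [ENNReal.ofReal_sub 1 hq0.le, ENNReal.ofReal_one]
        rw [this, ← ENNReal.ofReal_inv_of_pos (by linarith), ← ENNReal.ofReal_mul hC]
        congr 1
        field_simp

lemma stmt7_rpow_lip (t M a b : ℝ) (ht : 0 < t) (hM : 0 < M) (ha : M ≤ a) (hb : M ≤ b) :
    |a ^ (-t) - b ^ (-t)| ≤ t * M ^ (-t - 1) * |a - b| := by
  have key : ∀ x ∈ Set.Ici M, HasDerivWithinAt (fun x : ℝ => x ^ (-t))
      (-t * x ^ (-t - 1)) (Set.Ici M) x := by
    intro x hx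
    exact (Real.hasDerivAt_rpow_const
      (Or.inl (ne_of_gt (lt_of_lt_of_le hM hx)))).hasDerivWithinAt
  have hbd : ∀ x ∈ Set.Ici M, ‖-t * x ^ (-t - 1)‖ ≤ t * M ^ (-t - 1) := by
    intro x hx
    have hx0 : (0:ℝ) < x := lt_of_lt_of_le hM hx
    rw [norm_mul, Real.norm_eq_abs, Real.norm_eq_abs, abs_neg, abs_of_pos ht,
      abs_of_pos (Real.rpow_pos_of_pos hx0 _)]
    have : x ^ (-t - 1) ≤ M ^ (-t - 1) :=
      Real.rpow_le_rpow_of_nonpos hM hx (by linarith)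
    nlinarith
  have := Convex.norm_image_sub_le_of_norm_hasDerivWithin_le key hbd
    (convex_Ici M) (Set.mem_Ici.2 hb) (Set.mem_Ici.2 ha)
  simpa [Real.norm_eq_abs] using this

section Ptwise

variable {E : Type*} [NormedAddCommGroup E]
variable (s α Kstar : ℝ) (K : E → ℂ)

/-- The regularized kernel. -/
noncomputable def stmt7Kd (δ : ℝ) (w : E) : ℂ :=
  if w = 0 then 0 else K w * (((‖w‖ / max δ ‖w‖) ^ (s + α) : ℝ) : ℂ)

/-- The numerator function `H`. -/
noncomputable def stmt7H (w : E) : ℂ :=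
  if w = 0 then 0 else K w * ((‖w‖ ^ (s + α) : ℝ) : ℂ)

lemma stmt7Kd_rep (δ : ℝ) (hδ : 0 < δ) (w : E) :
    stmt7Kd s α K δ w
      = stmt7H s α K w * ((((max δ ‖w‖) ^ (s + α))⁻¹ : ℝ) : ℂ) := by
  unfold stmt7Kd stmt7H
  by_cases hw : w = 0
  · simp [hw]
  · have hm : (0:ℝ) < max δ ‖w‖ := lt_max_of_lt_left hδ
    simp only [hw, if_neg]
    rw [Real.div_rpow (norm_nonneg _) hm.le]
    push_cast
    field_simp

lemma stmt7H_bd (hα0 : 0 < α) (hKstar : 0 < Kstar)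
    (hKsm : ∀ x y : E, ‖(if x = 0 then 0 else K x * ((‖x‖ ^ (s + α) : ℝ) : ℂ))
        - (if y = 0 then 0 else K y * ((‖y‖ ^ (s + α) : ℝ) : ℂ))‖ ≤ Kstar * ‖x - y‖ ^ α)
    (w : E) : ‖stmt7H s α K w‖ ≤ Kstar * ‖w‖ ^ α := by
  have := hKsm w 0
  simpa [stmt7H] using this

lemma stmt7H_holder
    (hKsm : ∀ x y : E, ‖(if x = 0 then 0 else K x * ((‖x‖ ^ (s + α) : ℝ) : ℂ))
        - (if y = 0 then 0 else K y * ((‖y‖ ^ (s + α) : ℝ) : ℂ))‖ ≤ Kstar * ‖x - y‖ ^ α)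
    (u v : E) : ‖stmt7H s α K u - stmt7H s α K v‖ ≤ Kstar * ‖u - v‖ ^ α :=
  hKsm u v

lemma stmt7Kd_bd (hs : 0 < s) (hα0 : 0 < α)
    (hKbd : ∀ x : E, x ≠ 0 → ‖K x‖ ≤ (‖x‖ ^ s)⁻¹)
    (δ : ℝ) (hδ : 0 < δ) (w : E) :
    ‖stmt7Kd s α K δ w‖ ≤ (max δ ‖w‖) ^ (-s) := by
  have hm : (0:ℝ) < max δ ‖w‖ := lt_max_of_lt_left hδ
  by_cases hw : w = 0
  · simp only [stmt7Kd, hw, if_pos, norm_zero]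
    positivity
  · have hn : (0:ℝ) < ‖w‖ := norm_pos_iff.2 hw
    have hnm : ‖w‖ ≤ max δ ‖w‖ := le_max_right _ _
    have h1 : ‖stmt7Kd s α K δ w‖ = ‖K w‖ * (‖w‖ / max δ ‖w‖) ^ (s + α) := by
      rw [stmt7Kd, if_neg hw, norm_mul, Complex.norm_real, Real.norm_eq_abs,
        abs_of_nonneg (Real.rpow_nonneg (by positivity) _)]
    rw [h1]
    have h2 : ‖K w‖ * (‖w‖ / max δ ‖w‖) ^ (s + α)
        ≤ (‖w‖ ^ s)⁻¹ * (‖w‖ / max δ ‖w‖) ^ (s + α) := by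
      have := hKbd w hw
      have h3 : (0:ℝ) ≤ (‖w‖ / max δ ‖w‖) ^ (s + α) := Real.rpow_nonneg (by positivity) _
      nlinarith
    refine le_trans h2 ?_
    rw [Real.div_rpow hn.le hm.le, Real.rpow_add hn, Real.rpow_add hm,
      Real.rpow_neg hm.le]
    have h4 : ‖w‖ ^ α ≤ (max δ ‖w‖) ^ α := Real.rpow_le_rpow hn.le hnm (by linarith)
    have p1 : (0:ℝ) < ‖w‖ ^ s := Real.rpow_pos_of_pos hn _
    have p2 : (0:ℝ) < ‖w‖ ^ α := Real.rpow_pos_of_pos hn _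
    have p3 : (0:ℝ) < (max δ ‖w‖) ^ s := Real.rpow_pos_of_pos hm _
    have p4 : (0:ℝ) < (max δ ‖w‖) ^ α := Real.rpow_pos_of_pos hm _
    calc (‖w‖ ^ s)⁻¹ * (‖w‖ ^ s * ‖w‖ ^ α / ((max δ ‖w‖) ^ s * (max δ ‖w‖) ^ α))
        = ‖w‖ ^ α / ((max δ ‖w‖) ^ s * (max δ ‖w‖) ^ α) := by field_simp
      _ ≤ (max δ ‖w‖) ^ α / ((max δ ‖w‖) ^ s * (max δ ‖w‖) ^ α) := by gcongr
      _ = ((max δ ‖w‖) ^ s)⁻¹ := by field_simp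

lemma stmt7_ptwise (hs : 0 < s) (hα0 : 0 < α) (hα1 : α ≤ 1) (hKstar : 0 < Kstar)
    (hKbd : ∀ x : E, x ≠ 0 → ‖K x‖ ≤ (‖x‖ ^ s)⁻¹)
    (hKsm : ∀ x y : E, ‖(if x = 0 then 0 else K x * ((‖x‖ ^ (s + α) : ℝ) : ℂ))
        - (if y = 0 then 0 else K y * ((‖y‖ ^ (s + α) : ℝ) : ℂ))‖ ≤ Kstar * ‖x - y‖ ^ α)
    (δ : ℝ) (hδ : 0 < δ) (u v : E) :
    ‖stmt7Kd s α K δ u - stmt7Kd s α K δ v‖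
      ≤ (4 + Kstar + 2 * (s + α) * Kstar) * ‖u - v‖ ^ α
        / (max δ (min ‖u‖ ‖v‖)) ^ (s + α) := by
  set r : ℝ := ‖u - v‖ with hr
  set M : ℝ := max δ (min ‖u‖ ‖v‖) with hMdef
  have hM : 0 < M := lt_max_of_lt_left hδ
  have hMsα : (0:ℝ) < M ^ (s + α) := Real.rpow_pos_of_pos hM _
  have hCP : (0:ℝ) < 4 + Kstar + 2 * (s + α) * Kstar := by positivity
  by_cases huv : u = v
  · subst huv
    simp only [sub_self, norm_zero]
    positivity
  have hr0 : 0 < r := by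
    rw [hr, norm_pos_iff, sub_ne_zero]
    exact huv
  have hrα : (0:ℝ) < r ^ α := Real.rpow_pos_of_pos hr0 _
  set mu : ℝ := max δ ‖u‖ with hmu
  set mv : ℝ := max δ ‖v‖ with hmv
  have hmu0 : 0 < mu := lt_max_of_lt_left hδ
  have hmv0 : 0 < mv := lt_max_of_lt_left hδ
  have hMmu : M ≤ mu := max_le_max le_rfl (min_le_left _ _)
  have hMmv : M ≤ mv := max_le_max le_rfl (min_le_right _ _)
  by_cases hcase : M ≤ 2 * r
  · -- close case: use size bounds on each term
    have b1 : ‖stmt7Kd s α K δ u‖ ≤ M ^ (-s) :=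
      le_trans (stmt7Kd_bd s α K hs hα0 hKbd δ hδ u)
        (Real.rpow_le_rpow_of_nonpos hM hMmu (by linarith))
    have b2 : ‖stmt7Kd s α K δ v‖ ≤ M ^ (-s) :=
      le_trans (stmt7Kd_bd s α K hs hα0 hKbd δ hδ v)
        (Real.rpow_le_rpow_of_nonpos hM hMmv (by linarith))
    have key : M ^ (-s) ≤ 2 * r ^ α / M ^ (s + α) := by
      have e : M ^ (-s) = M ^ α / M ^ (s + α) := by
        rw [eq_div_iff hMsα.ne', ← Real.rpow_add hM]
        congr 1
        ring
      rw [e]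
      have h5 : M ^ α ≤ (2 * r) ^ α := Real.rpow_le_rpow hM.le hcase (by linarith)
      have h6 : (2 * r) ^ α ≤ 2 * r ^ α := by
        rw [Real.mul_rpow (by norm_num) hr0.le]
        have : (2:ℝ) ^ α ≤ 2 := by
          calc (2:ℝ) ^ α ≤ (2:ℝ) ^ (1:ℝ) :=
            Real.rpow_le_rpow_of_exponent_le one_le_two hα1
          _ = 2 := Real.rpow_one 2
        nlinarith
      gcongr
      linarith
    calc ‖stmt7Kd s α K δ u - stmt7Kd s α K δ v‖
        ≤ ‖stmt7Kd s α K δ u‖ + ‖stmt7Kd s α K δ v‖ := norm_sub_le _ _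
      _ ≤ 2 * (2 * r ^ α / M ^ (s + α)) := by
          have := le_trans b1 key
          have := le_trans b2 key
          linarith
      _ ≤ (4 + Kstar + 2 * (s + α) * Kstar) * r ^ α / M ^ (s + α) := by
          have h8 : (0:ℝ) ≤ (Kstar + 2 * (s + α) * Kstar) * (r ^ α / M ^ (s + α)) := by
            positivity
          have h9 : (4 + Kstar + 2 * (s + α) * Kstar) * r ^ α / M ^ (s + α)
              = 4 * (r ^ α / M ^ (s + α))
                + (Kstar + 2 * (s + α) * Kstar) * (r ^ α / M ^ (s + α)) := by ring
          have h10 : 2 * r ^ α / M ^ (s + α) = 2 * (r ^ α / M ^ (s + α)) := by ring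
          rw [h9, h10]
          linarith
  · -- smooth case : 2r < M
    push_neg at hcase
    have hrM : r ≤ M := by linarith
    have hmumv : |mu - mv| ≤ r := by
      have h1 : |mu - mv| ≤ |‖u‖ - ‖v‖| := by
        rw [hmu, hmv, max_comm δ ‖u‖, max_comm δ ‖v‖]
        exact abs_max_sub_max_le_abs _ _ _
      exact le_trans h1 (abs_norm_sub_norm_le _ _)
    have hminmuv : min mu mv = M := by
      rw [hmu, hmv, hMdef, max_min_distrib_left]
    have hmvle : mv ≤ 2 * M := by
      rcases le_total mu mv with h | h
      · have : mu = M := by rw [← hminmuv, min_eq_left h]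
        have := abs_le.1 hmumv
        have h2 : mv - mu ≤ r := by cases abs_le.1 hmumv; linarith
        linarith
      · have : mv = M := by rw [← hminmuv, min_eq_right h]
        linarith
    have repu := stmt7Kd_rep s α K δ hδ u
    have repv := stmt7Kd_rep s α K δ hδ v
    have heq : stmt7Kd s α K δ u - stmt7Kd s α K δ v
        = (stmt7H s α K u - stmt7H s α K v) * (((mu ^ (s + α))⁻¹ : ℝ) : ℂ)
          + stmt7H s α K v * ((((mu ^ (s + α))⁻¹ - (mv ^ (s + α))⁻¹ : ℝ)) : ℂ) := by
      rw [repu, repv]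
      push_cast
      ring
    have hterm1 : ‖(stmt7H s α K u - stmt7H s α K v) * (((mu ^ (s + α))⁻¹ : ℝ) : ℂ)‖
        ≤ Kstar * r ^ α * (M ^ (s + α))⁻¹ := by
      rw [norm_mul, Complex.norm_real, Real.norm_eq_abs,
        abs_of_nonneg (by positivity)]
      have h1 := stmt7H_holder s α Kstar K hKsm u v
      have h2 : (mu ^ (s + α))⁻¹ ≤ (M ^ (s + α))⁻¹ := by
        have : M ^ (s + α) ≤ mu ^ (s + α) :=
          Real.rpow_le_rpow hM.le hMmu (by linarith)
        exact inv_anti₀ hMsα this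
      have h3 : (0:ℝ) ≤ (mu ^ (s + α))⁻¹ := by positivity
      have h4 : (0:ℝ) ≤ ‖stmt7H s α K u - stmt7H s α K v‖ := norm_nonneg _
      calc ‖stmt7H s α K u - stmt7H s α K v‖ * (mu ^ (s + α))⁻¹
          ≤ (Kstar * r ^ α) * (M ^ (s + α))⁻¹ := by
            apply mul_le_mul h1 h2 h3 (by positivity)
        _ = Kstar * r ^ α * (M ^ (s + α))⁻¹ := by ring
    have hterm2 : ‖stmt7H s α K v * ((((mu ^ (s + α))⁻¹ - (mv ^ (s + α))⁻¹ : ℝ)) : ℂ)‖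
        ≤ 2 * (s + α) * Kstar * r ^ α * (M ^ (s + α))⁻¹ := by
      rw [norm_mul, Complex.norm_real, Real.norm_eq_abs]
      have hHv : ‖stmt7H s α K v‖ ≤ Kstar * (2 * M) ^ α := by
        refine le_trans (stmt7H_bd s α Kstar K hα0 hKstar hKsm v) ?_
        have hv2M : ‖v‖ ≤ 2 * M := le_trans (le_max_right δ ‖v‖) hmvle
        exact mul_le_mul_of_nonneg_left
          (Real.rpow_le_rpow (norm_nonneg v) hv2M hα0.le) hKstar.le
      have hlip : |(mu ^ (s + α))⁻¹ - (mv ^ (s + α))⁻¹|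
          ≤ (s + α) * M ^ (-(s + α) - 1) * r := by
        have e1 : (mu ^ (s + α))⁻¹ = mu ^ (-(s + α)) := by
          rw [Real.rpow_neg hmu0.le]
        have e2 : (mv ^ (s + α))⁻¹ = mv ^ (-(s + α)) := by
          rw [Real.rpow_neg hmv0.le]
        rw [e1, e2]
        refine le_trans (stmt7_rpow_lip (s + α) M mu mv (by linarith) hM hMmu hMmv) ?_
        have : (0:ℝ) < (s + α) * M ^ (-(s + α) - 1) := by positivity
        nlinarith
      have hkey : (2 * M) ^ α * ((s + α) * M ^ (-(s + α) - 1) * r)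
          ≤ 2 * (s + α) * (r ^ α * (M ^ (s + α))⁻¹) := by
        have h2α : (2 * M) ^ α ≤ 2 * M ^ α := by
          rw [Real.mul_rpow (by norm_num) hM.le]
          have : (2:ℝ) ^ α ≤ 2 := by
            calc (2:ℝ) ^ α ≤ (2:ℝ) ^ (1:ℝ) :=
              Real.rpow_le_rpow_of_exponent_le one_le_two hα1
            _ = 2 := Real.rpow_one 2
          have : (0:ℝ) < M ^ α := Real.rpow_pos_of_pos hM _
          nlinarith
        have hMα : (0:ℝ) < M ^ α := Real.rpow_pos_of_pos hM _
        have hcore : M ^ α * (M ^ (-(s + α) - 1) * r) ≤ r ^ α * (M ^ (s + α))⁻¹ := by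
          have e3 : M ^ α * M ^ (-(s + α) - 1) = (M ^ (s + α))⁻¹ * M ^ (α - 1) := by
            rw [← Real.rpow_add hM, ← Real.rpow_neg hM.le, ← Real.rpow_add hM]
            congr 1
            ring
          have e4 : r = r ^ α * r ^ (1 - α) := by
            rw [← Real.rpow_add hr0]
            have h9 : α + (1 - α) = 1 := by ring
            rw [h9, Real.rpow_one]
          have h5 : r ^ (1 - α) * M ^ (α - 1) ≤ 1 := by
            have h6 : r ^ (1 - α) ≤ M ^ (1 - α) :=
              Real.rpow_le_rpow hr0.le hrM (by linarith)
            have e5 : M ^ (α - 1) = (M ^ (1 - α))⁻¹ := by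
              rw [← Real.rpow_neg hM.le]
              congr 1
              ring
            have h7 : (0:ℝ) < M ^ (1 - α) := Real.rpow_pos_of_pos hM _
            rw [e5, mul_inv_le_iff₀ h7, one_mul]
            exact h6
          calc M ^ α * (M ^ (-(s + α) - 1) * r)
              = (M ^ α * M ^ (-(s + α) - 1)) * r := by ring
            _ = ((M ^ (s + α))⁻¹ * M ^ (α - 1)) * (r ^ α * r ^ (1 - α)) := by
                rw [e3, ← e4]
            _ = (r ^ α * (M ^ (s + α))⁻¹) * (r ^ (1 - α) * M ^ (α - 1)) := by ring
            _ ≤ (r ^ α * (M ^ (s + α))⁻¹) * 1 := by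
                apply mul_le_mul_of_nonneg_left h5 (by positivity)
            _ = r ^ α * (M ^ (s + α))⁻¹ := mul_one _
        have hpos : (0:ℝ) < s + α := by linarith
        have hrpos : (0:ℝ) ≤ M ^ (-(s + α) - 1) * r := by positivity
        calc (2 * M) ^ α * ((s + α) * M ^ (-(s + α) - 1) * r)
            ≤ 2 * M ^ α * ((s + α) * M ^ (-(s + α) - 1) * r) := by
              apply mul_le_mul_of_nonneg_right h2α
              positivity
          _ = 2 * (s + α) * (M ^ α * (M ^ (-(s + α) - 1) * r)) := by ring
          _ ≤ 2 * (s + α) * (r ^ α * (M ^ (s + α))⁻¹) := by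
              apply mul_le_mul_of_nonneg_left hcore
              positivity
      calc ‖stmt7H s α K v‖ * |(mu ^ (s + α))⁻¹ - (mv ^ (s + α))⁻¹|
          ≤ (Kstar * (2 * M) ^ α) * ((s + α) * M ^ (-(s + α) - 1) * r) := by
            apply mul_le_mul hHv hlip (abs_nonneg _) (by positivity)
        _ = Kstar * ((2 * M) ^ α * ((s + α) * M ^ (-(s + α) - 1) * r)) := by ring
        _ ≤ Kstar * (2 * (s + α) * (r ^ α * (M ^ (s + α))⁻¹)) := by
            apply mul_le_mul_of_nonneg_left hkey hKstar.le
        _ = 2 * (s + α) * Kstar * r ^ α * (M ^ (s + α))⁻¹ := by ring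
    calc ‖stmt7Kd s α K δ u - stmt7Kd s α K δ v‖
        ≤ ‖(stmt7H s α K u - stmt7H s α K v) * (((mu ^ (s + α))⁻¹ : ℝ) : ℂ)‖
          + ‖stmt7H s α K v * ((((mu ^ (s + α))⁻¹ - (mv ^ (s + α))⁻¹ : ℝ)) : ℂ)‖ := by
          rw [heq]
          exact norm_add_le _ _
      _ ≤ Kstar * r ^ α * (M ^ (s + α))⁻¹
          + 2 * (s + α) * Kstar * r ^ α * (M ^ (s + α))⁻¹ := add_le_add hterm1 hterm2
      _ ≤ (4 + Kstar + 2 * (s + α) * Kstar) * r ^ α / M ^ (s + α) := by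
          rw [div_eq_mul_inv]
          have : (0:ℝ) ≤ r ^ α * (M ^ (s + α))⁻¹ := by positivity
          nlinarith

lemma stmt7_ball {F : Type*} [NormedAddCommGroup F] [MeasurableSpace F] [BorelSpace F]
    (s α Kstar Λ : ℝ) (K : F → ℂ)
    (hs : 0 < s) (hα0 : 0 < α) (hΛ : 0 < Λ)
    (μ : Measure F)
    (hμ : ∀ (x : F) (r : ℝ), 0 < r → μ (ball x r) ≤ ENNReal.ofReal (Λ * r ^ s))
    (hKbd : ∀ x : F, x ≠ 0 → ‖K x‖ ≤ (‖x‖ ^ s)⁻¹)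
    (δ ρ : ℝ) (hδ : 0 < δ) (hρ : δ ≤ ρ) (z : F) :
    ∫⁻ x in ball z ρ, ENNReal.ofReal ‖stmt7Kd s α K δ (x - z)‖ ∂μ
      ≤ ENNReal.ofReal (Λ + ρ ^ α * (Λ * 2 ^ s / (1 - 2 ^ (-α)) * δ ^ (-α))) := by
  have hmeasR : Measurable fun x : F => ENNReal.ofReal (‖x - z‖ ^ (-(s + α))) :=
    (((continuous_id.sub continuous_const).norm.measurable).pow measurable_const).ennreal_ofReal
  have hmeas2 : Measurable fun x : F => ENNReal.ofReal (ρ ^ α * ‖x - z‖ ^ (-(s + α))) :=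
    (measurable_const.mul
      (((continuous_id.sub continuous_const).norm.measurable).pow measurable_const)).ennreal_ofReal
  have hset1 : MeasurableSet {x : F | δ ≤ ‖x - z‖} :=
    measurableSet_le measurable_const ((continuous_id.sub continuous_const).norm.measurable)
  set g1 : F → ℝ≥0∞ := (ball z δ).indicator fun _ => ENNReal.ofReal (δ ^ (-s)) with hg1
  set g2 : F → ℝ≥0∞ := {x : F | δ ≤ ‖x - z‖}.indicator
    (fun x => ENNReal.ofReal (ρ ^ α * ‖x - z‖ ^ (-(s + α)))) with hg2
  have hρ0 : 0 < ρ := lt_of_lt_of_le hδ hρ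
  have hmaj : ∀ x ∈ ball z ρ, ENNReal.ofReal ‖stmt7Kd s α K δ (x - z)‖ ≤ g1 x + g2 x := by
    intro x hx
    have hxρ : ‖x - z‖ < ρ := by rwa [mem_ball, dist_eq_norm] at hx
    have hbd := stmt7Kd_bd s α K hs hα0 hKbd δ hδ (x - z)
    by_cases hxδ : ‖x - z‖ < δ
    · have h1 : g1 x = ENNReal.ofReal (δ ^ (-s)) := by
        rw [hg1, Set.indicator_of_mem (by rwa [mem_ball, dist_eq_norm])]
      have h2 : ENNReal.ofReal ‖stmt7Kd s α K δ (x - z)‖ ≤ g1 x := by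
        rw [h1]
        refine ENNReal.ofReal_le_ofReal (le_trans hbd (le_of_eq ?_))
        rw [max_eq_left hxδ.le]
      exact le_trans h2 (le_add_of_nonneg_right zero_le)
    · push_neg at hxδ
      have hn0 : 0 < ‖x - z‖ := lt_of_lt_of_le hδ hxδ
      have h1 : g2 x = ENNReal.ofReal (ρ ^ α * ‖x - z‖ ^ (-(s + α))) := by
        rw [hg2, Set.indicator_of_mem (show x ∈ {x : F | δ ≤ ‖x - z‖} from hxδ)]
      have h2 : ENNReal.ofReal ‖stmt7Kd s α K δ (x - z)‖ ≤ g2 x := by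
        rw [h1]
        refine ENNReal.ofReal_le_ofReal (le_trans hbd ?_)
        rw [max_eq_right hxδ]
        have e1 : ‖x - z‖ ^ (-s) = ‖x - z‖ ^ α * ‖x - z‖ ^ (-(s + α)) := by
          rw [← Real.rpow_add hn0]
          congr 1
          ring
        rw [e1]
        have h3 : ‖x - z‖ ^ α ≤ ρ ^ α := Real.rpow_le_rpow hn0.le hxρ.le hα0.le
        have h4 : (0:ℝ) ≤ ‖x - z‖ ^ (-(s + α)) := Real.rpow_nonneg hn0.le _
        exact mul_le_mul_of_nonneg_right h3 h4
      exact le_trans h2 (le_add_of_nonneg_left zero_le)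
  calc ∫⁻ x in ball z ρ, ENNReal.ofReal ‖stmt7Kd s α K δ (x - z)‖ ∂μ
      ≤ ∫⁻ x in ball z ρ, (g1 x + g2 x) ∂μ := by
        refine setLIntegral_mono ?_ hmaj
        exact ((measurable_const.indicator measurableSet_ball).add
          (hmeas2.indicator hset1))
    _ ≤ ∫⁻ x, (g1 x + g2 x) ∂μ := setLIntegral_le_lintegral _ _
    _ = (∫⁻ x, g1 x ∂μ) + ∫⁻ x, g2 x ∂μ :=
        lintegral_add_left (measurable_const.indicator measurableSet_ball) _
    _ ≤ ENNReal.ofReal Λ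
        + ENNReal.ofReal (ρ ^ α * (Λ * 2 ^ s / (1 - 2 ^ (-α)) * δ ^ (-α))) := by
        gcongr
        · rw [hg1, lintegral_indicator measurableSet_ball, setLIntegral_const]
          calc ENNReal.ofReal (δ ^ (-s)) * μ (ball z δ)
              ≤ ENNReal.ofReal (δ ^ (-s)) * ENNReal.ofReal (Λ * δ ^ s) :=
                mul_le_mul_right (hμ z δ hδ) _
            _ = ENNReal.ofReal (δ ^ (-s) * (Λ * δ ^ s)) := by
                rw [ENNReal.ofReal_mul (Real.rpow_nonneg hδ.le _)]
            _ = ENNReal.ofReal Λ := by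
                congr 1
                rw [Real.rpow_neg hδ.le]
                have : (0:ℝ) < δ ^ s := Real.rpow_pos_of_pos hδ _
                field_simp
        · rw [hg2, lintegral_indicator hset1]
          have e2 : ∀ x : F, ENNReal.ofReal (ρ ^ α * ‖x - z‖ ^ (-(s + α)))
              = ENNReal.ofReal (ρ ^ α) * ENNReal.ofReal (‖x - z‖ ^ (-(s + α))) := by
            intro x
            rw [ENNReal.ofReal_mul (Real.rpow_nonneg hρ0.le _)]
          simp_rw [e2]
          rw [lintegral_const_mul _ hmeasR]
          calc ENNReal.ofReal (ρ ^ α)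
                * ∫⁻ x in {x : F | δ ≤ ‖x - z‖}, ENNReal.ofReal (‖x - z‖ ^ (-(s + α))) ∂μ
              ≤ ENNReal.ofReal (ρ ^ α)
                * ENNReal.ofReal (Λ * 2 ^ s / (1 - 2 ^ (-α)) * δ ^ (-α)) :=
                mul_le_mul_right (stmt7_tail s α Λ hs hα0 hΛ μ hμ z δ hδ) _
            _ = ENNReal.ofReal (ρ ^ α * (Λ * 2 ^ s / (1 - 2 ^ (-α)) * δ ^ (-α))) := by
                rw [ENNReal.ofReal_mul (Real.rpow_nonneg hρ0.le _)]
    _ = ENNReal.ofReal (Λ + ρ ^ α * (Λ * 2 ^ s / (1 - 2 ^ (-α)) * δ ^ (-α))) := by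
        have hq1 : (0:ℝ) < 1 - 2 ^ (-α) := by
          have := Real.rpow_lt_one_of_one_lt_of_neg one_lt_two (neg_lt_zero.mpr hα0)
          linarith
        have h5 : (0:ℝ) ≤ ρ ^ α * (Λ * 2 ^ s / (1 - 2 ^ (-α)) * δ ^ (-α)) := by
          apply mul_nonneg (Real.rpow_nonneg hρ0.le _)
          exact mul_nonneg (div_nonneg (by positivity) hq1.le) (Real.rpow_nonneg hδ.le _)
        rw [ENNReal.ofReal_add hΛ.le h5]

end Ptwise

section Assembly

variable {F : Type*} [NormedAddCommGroup F] [MeasurableSpace F] [BorelSpace F]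

lemma stmt7_intC (Λ s : ℝ) (hs : 0 < s) (hΛ : 0 < Λ) (μ : Measure F)
    (hμ : ∀ (x : F) (r : ℝ), 0 < r → μ (ball x r) ≤ ENNReal.ofReal (Λ * r ^ s))
    (c R : ℝ) (hc : 0 ≤ c) (hR : 0 < R) (z : F) :
    ∫⁻ x, ((ball z R).indicator fun _ => ENNReal.ofReal c) x ∂μ
      ≤ ENNReal.ofReal (c * (Λ * R ^ s)) := by
  rw [lintegral_indicator measurableSet_ball, setLIntegral_const]
  calc ENNReal.ofReal c * μ (ball z R)
      ≤ ENNReal.ofReal c * ENNReal.ofReal (Λ * R ^ s) := mul_le_mul_right (hμ z R hR) _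
    _ = ENNReal.ofReal (c * (Λ * R ^ s)) := (ENNReal.ofReal_mul hc).symm

lemma stmt7_intB (Λ s α : ℝ) (hs : 0 < s) (hα0 : 0 < α) (hΛ : 0 < Λ) (μ : Measure F)
    (hμ : ∀ (x : F) (r : ℝ), 0 < r → μ (ball x r) ≤ ENNReal.ofReal (Λ * r ^ s))
    (c R : ℝ) (hc : 0 ≤ c) (hR : 0 < R) (z : F) :
    ∫⁻ x, ({x : F | R ≤ ‖x - z‖}.indicator
        fun x => ENNReal.ofReal (c * ‖x - z‖ ^ (-(s + α)))) x ∂μ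
      ≤ ENNReal.ofReal (c * (Λ * 2 ^ s / (1 - 2 ^ (-α)) * R ^ (-α))) := by
  have hset1 : MeasurableSet {x : F | R ≤ ‖x - z‖} :=
    measurableSet_le measurable_const ((continuous_id.sub continuous_const).norm.measurable)
  have hmeasR : Measurable fun x : F => ENNReal.ofReal (‖x - z‖ ^ (-(s + α))) :=
    (((continuous_id.sub continuous_const).norm.measurable).pow measurable_const).ennreal_ofReal
  rw [lintegral_indicator hset1]
  have e2 : ∀ x : F, ENNReal.ofReal (c * ‖x - z‖ ^ (-(s + α)))
      = ENNReal.ofReal c * ENNReal.ofReal (‖x - z‖ ^ (-(s + α))) := fun x =>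
    ENNReal.ofReal_mul hc
  simp_rw [e2]
  rw [lintegral_const_mul _ hmeasR]
  calc ENNReal.ofReal c
        * ∫⁻ x in {x : F | R ≤ ‖x - z‖}, ENNReal.ofReal (‖x - z‖ ^ (-(s + α))) ∂μ
      ≤ ENNReal.ofReal c * ENNReal.ofReal (Λ * 2 ^ s / (1 - 2 ^ (-α)) * R ^ (-α)) :=
        mul_le_mul_right (stmt7_tail s α Λ hs hα0 hΛ μ hμ z R hR) _
    _ = ENNReal.ofReal (c * (Λ * 2 ^ s / (1 - 2 ^ (-α)) * R ^ (-α))) :=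
        (ENNReal.ofReal_mul hc).symm

end Assembly

set_option maxHeartbeats 1000000 in
/-- For a `Λ`-nice measure `μ` and the regularized kernels `K_δ` of an
`s`-dimensional CZ kernel, there is `C₁ > 0` (depending on `s,d,α,‖K‖_*,Λ`) such that for
all `δ > 0` and `y, y'`, `|∫ [K_δ(x−y) − K_δ(x−y')] dμ(x)| ≤ C₁|y−y'|^α/δ^α`. -/
theorem stmt7 (d : ℕ) (hd : 2 ≤ d) (s α Kstar Λ : ℝ) (hs : 0 < s) (hsd : s < d)
    (hα0 : 0 < α) (hα1 : α ≤ 1) (hKstar : 0 < Kstar) (hΛ : 0 < Λ)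
    (μ : Measure (EuclideanSpace ℝ (Fin d)))
    (hμ : ∀ (x : EuclideanSpace ℝ (Fin d)) (r : ℝ), 0 < r →
      μ (ball x r) ≤ ENNReal.ofReal (Λ * r ^ s))
    (K : EuclideanSpace ℝ (Fin d) → ℂ)
    (hKbd : ∀ x, x ≠ 0 → ‖K x‖ ≤ (‖x‖ ^ s)⁻¹)
    (hKodd : ∀ x, K (-x) = -K x)
    (hKsm : ∀ x y, ‖(if x = 0 then 0 else K x * ((‖x‖ ^ (s + α) : ℝ) : ℂ))
        - (if y = 0 then 0 else K y * ((‖y‖ ^ (s + α) : ℝ) : ℂ))‖ ≤ Kstar * ‖x - y‖ ^ α) :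
    ∃ C₁ : ℝ, 0 < C₁ ∧
      ∀ (δ : ℝ), 0 < δ → ∀ y y' : EuclideanSpace ℝ (Fin d),
        ‖∫ x, ((if x - y = 0 then 0 else
              K (x - y) * (((‖x - y‖ / max δ ‖x - y‖) ^ (s + α) : ℝ) : ℂ))
            - (if x - y' = 0 then 0 else
              K (x - y') * (((‖x - y'‖ / max δ ‖x - y'‖) ^ (s + α) : ℝ) : ℂ))) ∂μ‖
          ≤ C₁ * ‖y - y'‖ ^ α / δ ^ α := by
  have hq1 : (0:ℝ) < 1 - 2 ^ (-α) := by
    have := Real.rpow_lt_one_of_one_lt_of_neg one_lt_two (neg_lt_zero.mpr hα0)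
    linarith
  set CP : ℝ := 4 + Kstar + 2 * (s + α) * Kstar with hCPdef
  set Q : ℝ := 2 ^ s / (1 - 2 ^ (-α)) with hQdef
  have hCP0 : 0 < CP := by
    have h := mul_pos (show (0:ℝ) < 2 * (s + α) by linarith) hKstar
    rw [hCPdef]
    nlinarith
  have hQ0 : 0 < Q := div_pos (Real.rpow_pos_of_pos two_pos s) hq1
  have h4s : (0:ℝ) < (4:ℝ) ^ s := Real.rpow_pos_of_pos (by norm_num) s
  have h2sα : (0:ℝ) < (2:ℝ) ^ (s + α) := Real.rpow_pos_of_pos two_pos _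
  set C₁ : ℝ := Λ * (2 + 10 * Q + CP * 4 ^ s + CP * 2 ^ (s + α) * Q) with hC1def
  have hC1 : 0 < C₁ := by
    apply mul_pos hΛ
    nlinarith [mul_pos hCP0 h4s, mul_pos (mul_pos hCP0 h2sα) hQ0]
  refine ⟨C₁, hC1, ?_⟩
  intro δ hδ y y'
  by_cases hyy : y = y'
  · subst hyy
    simp only [sub_self, integral_zero, norm_zero]
    rw [Real.zero_rpow hα0.ne', mul_zero, zero_div]
  -- main case
  set r : ℝ := ‖y - y'‖ with hrdef
  have hr0 : (0:ℝ) < r := by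
    rw [hrdef, norm_pos_iff, sub_ne_zero]
    exact hyy
  set ρ : ℝ := 2 * (r + δ) with hρdef
  have hρ0 : 0 < ρ := by rw [hρdef]; linarith
  have hδρ : δ ≤ ρ := by rw [hρdef]; linarith
  set ρ' : ℝ := ρ + r with hρ'def
  have hρ'0 : 0 < ρ' := by rw [hρ'def]; linarith
  have hρρ' : ρ ≤ ρ' := by rw [hρ'def]; linarith
  have hδρ' : δ ≤ ρ' := le_trans hδρ hρρ'
  suffices hsuff : ‖∫ x, (stmt7Kd s α K δ (x - y) - stmt7Kd s α K δ (x - y')) ∂μ‖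
      ≤ C₁ * r ^ α / δ ^ α by
    unfold stmt7Kd at hsuff
    convert hsuff
  have hnn : (0:ℝ) ≤ C₁ * r ^ α / δ ^ α := by
    rw [mul_div_assoc]
    exact mul_nonneg hC1.le
      (div_nonneg (Real.rpow_nonneg hr0.le _) (Real.rpow_nonneg hδ.le _))
  refine le_trans (norm_integral_le_lintegral_norm _)
    (ENNReal.toReal_le_of_le_ofReal hnn ?_)
  -- pointwise estimates
  have hptw : ∀ x, ‖stmt7Kd s α K δ (x - y) - stmt7Kd s α K δ (x - y')‖
      ≤ CP * r ^ α / (max δ (min ‖x - y‖ ‖x - y'‖)) ^ (s + α) := by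
    intro x
    have h := stmt7_ptwise s α Kstar K hs hα0 hα1 hKstar hKbd
      (fun a b => by convert hKsm a b) δ hδ (x - y) (x - y')
    have e : (x - y) - (x - y') = y' - y := by abel
    rw [e] at h
    have e2 : ‖y' - y‖ = r := by rw [norm_sub_rev]
    rw [e2, ← hCPdef] at h
    exact h
  have houter : ∀ x, ρ ≤ ‖x - y‖ →
      ‖stmt7Kd s α K δ (x - y) - stmt7Kd s α K δ (x - y')‖
        ≤ CP * 2 ^ (s + α) * r ^ α * ‖x - y‖ ^ (-(s + α)) := by
    intro x hx
    have hn0 : (0:ℝ) < ‖x - y‖ := lt_of_lt_of_le hρ0 hx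
    have htri : ‖x - y‖ ≤ ‖x - y'‖ + r := by
      calc ‖x - y‖ = ‖(x - y') + (y' - y)‖ := by rw [sub_add_sub_cancel]
        _ ≤ ‖x - y'‖ + ‖y' - y‖ := norm_add_le _ _
        _ = ‖x - y'‖ + r := by rw [norm_sub_rev y' y, ← hrdef]
    have hr2 : r ≤ ρ / 2 := by rw [hρdef]; linarith
    have hmin : ‖x - y‖ / 2 ≤ min ‖x - y‖ ‖x - y'‖ := by
      refine le_min (by linarith) ?_
      linarith
    have hM : ‖x - y‖ / 2 ≤ max δ (min ‖x - y‖ ‖x - y'‖) :=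
      le_trans hmin (le_max_right _ _)
    have hMp : (0:ℝ) < (‖x - y‖ / 2) ^ (s + α) := Real.rpow_pos_of_pos (by linarith) _
    have h2 : (‖x - y‖ / 2) ^ (s + α) ≤ (max δ (min ‖x - y‖ ‖x - y'‖)) ^ (s + α) :=
      Real.rpow_le_rpow (by linarith) hM (by linarith)
    refine le_trans (hptw x) ?_
    have h3 : CP * r ^ α / (max δ (min ‖x - y‖ ‖x - y'‖)) ^ (s + α)
        ≤ CP * r ^ α / (‖x - y‖ / 2) ^ (s + α) := by
      apply div_le_div_of_nonneg_left _ hMp h2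
      exact mul_nonneg hCP0.le (Real.rpow_nonneg hr0.le _)
    refine le_trans h3 (le_of_eq ?_)
    rw [Real.div_rpow hn0.le two_pos.le, Real.rpow_neg hn0.le]
    have hns : (0:ℝ) < ‖x - y‖ ^ (s + α) := Real.rpow_pos_of_pos hn0 _
    field_simp
  -- the outer majorant
  set g4 : EuclideanSpace ℝ (Fin d) → ℝ≥0∞ := {x | ρ ≤ ‖x - y‖}.indicator
      (fun x => ENNReal.ofReal (CP * 2 ^ (s + α) * r ^ α * ‖x - y‖ ^ (-(s + α)))) with hg4def
  have hsetρ : MeasurableSet {x : EuclideanSpace ℝ (Fin d) | ρ ≤ ‖x - y‖} :=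
    measurableSet_le measurable_const ((continuous_id.sub continuous_const).norm.measurable)
  have hmg4 : Measurable g4 := by
    rw [hg4def]
    exact ((measurable_const.mul
      (((continuous_id.sub continuous_const).norm.measurable).pow
        measurable_const)).ennreal_ofReal).indicator hsetρ
  have hg4c : (0:ℝ) ≤ CP * 2 ^ (s + α) * r ^ α :=
    mul_nonneg (mul_nonneg hCP0.le h2sα.le) (Real.rpow_nonneg hr0.le _)
  have hg4int : ∫⁻ x, g4 x ∂μ
      ≤ ENNReal.ofReal ((CP * 2 ^ (s + α) * r ^ α)
          * (Λ * 2 ^ s / (1 - 2 ^ (-α)) * δ ^ (-α))) := by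
    refine le_trans
      (stmt7_intB Λ s α hs hα0 hΛ μ hμ (CP * 2 ^ (s + α) * r ^ α) ρ hg4c hρ0 y) ?_
    refine ENNReal.ofReal_le_ofReal ?_
    have hpa : ρ ^ (-α) ≤ δ ^ (-α) :=
      Real.rpow_le_rpow_of_nonpos hδ hδρ (by linarith)
    have hcoef : (0:ℝ) ≤ Λ * 2 ^ s / (1 - 2 ^ (-α)) := by positivity
    exact mul_le_mul_of_nonneg_left (mul_le_mul_of_nonneg_left hpa hcoef) hg4c
  by_cases hcase : r ≤ δ
  · -- Case A : r ≤ δ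
    set g1 : EuclideanSpace ℝ (Fin d) → ℝ≥0∞ := (ball y ρ).indicator
        (fun _ => ENNReal.ofReal (CP * r ^ α * δ ^ (-(s + α)))) with hg1def
    have hmg1 : Measurable g1 := measurable_const.indicator measurableSet_ball
    have hclaim : ∀ x, ENNReal.ofReal
        ‖stmt7Kd s α K δ (x - y) - stmt7Kd s α K δ (x - y')‖ ≤ g1 x + g4 x := by
      intro x
      by_cases hx : ‖x - y‖ < ρ
      · have h1 : g1 x = ENNReal.ofReal (CP * r ^ α * δ ^ (-(s + α))) := by
          rw [hg1def, Set.indicator_of_mem (by rwa [mem_ball, dist_eq_norm])]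
        have h2 : ‖stmt7Kd s α K δ (x - y) - stmt7Kd s α K δ (x - y')‖
            ≤ CP * r ^ α * δ ^ (-(s + α)) := by
          refine le_trans (hptw x) ?_
          have hM : δ ≤ max δ (min ‖x - y‖ ‖x - y'‖) := le_max_left _ _
          have hMp : (0:ℝ) < δ ^ (s + α) := Real.rpow_pos_of_pos hδ _
          have h3 : δ ^ (s + α) ≤ (max δ (min ‖x - y‖ ‖x - y'‖)) ^ (s + α) :=
            Real.rpow_le_rpow hδ.le hM (by linarith)
          have h4 : CP * r ^ α / (max δ (min ‖x - y‖ ‖x - y'‖)) ^ (s + α)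
              ≤ CP * r ^ α / δ ^ (s + α) := by
            apply div_le_div_of_nonneg_left _ hMp h3
            exact mul_nonneg hCP0.le (Real.rpow_nonneg hr0.le _)
          refine le_trans h4 (le_of_eq ?_)
          rw [Real.rpow_neg hδ.le]
          ring
        calc ENNReal.ofReal ‖stmt7Kd s α K δ (x - y) - stmt7Kd s α K δ (x - y')‖
            ≤ g1 x := by rw [h1]; exact ENNReal.ofReal_le_ofReal h2
          _ ≤ g1 x + g4 x := self_le_add_right _ _
      · push_neg at hx
        have h1 : g4 x = ENNReal.ofReal
            (CP * 2 ^ (s + α) * r ^ α * ‖x - y‖ ^ (-(s + α))) := by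
          rw [hg4def, Set.indicator_of_mem
            (show x ∈ {x : EuclideanSpace ℝ (Fin d) | ρ ≤ ‖x - y‖} from hx)]
        calc ENNReal.ofReal ‖stmt7Kd s α K δ (x - y) - stmt7Kd s α K δ (x - y')‖
            ≤ g4 x := by rw [h1]; exact ENNReal.ofReal_le_ofReal (houter x hx)
          _ ≤ g1 x + g4 x := self_le_add_left _ _
    have hg1int : ∫⁻ x, g1 x ∂μ
        ≤ ENNReal.ofReal ((CP * r ^ α * δ ^ (-(s + α))) * (Λ * ρ ^ s)) := by
      rw [hg1def]
      exact stmt7_intC Λ s hs hΛ μ hμ _ ρ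
        (mul_nonneg (mul_nonneg hCP0.le (Real.rpow_nonneg hr0.le _))
          (Real.rpow_nonneg hδ.le _)) hρ0 y
    have hrealA : (CP * r ^ α * δ ^ (-(s + α))) * (Λ * ρ ^ s)
        + (CP * 2 ^ (s + α) * r ^ α) * (Λ * 2 ^ s / (1 - 2 ^ (-α)) * δ ^ (-α))
        ≤ C₁ * r ^ α / δ ^ α := by
      have hδα : (0:ℝ) < δ ^ α := Real.rpow_pos_of_pos hδ _
      have hX : C₁ * r ^ α / δ ^ α = C₁ * (r ^ α * δ ^ (-α)) := by
        rw [Real.rpow_neg hδ.le]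
        ring
      have hXnn : (0:ℝ) ≤ r ^ α * δ ^ (-α) :=
        mul_nonneg (Real.rpow_nonneg hr0.le _) (Real.rpow_nonneg hδ.le _)
      have hρ4 : ρ ≤ 4 * δ := by rw [hρdef]; linarith
      have h1 : ρ ^ s ≤ 4 ^ s * δ ^ s := by
        rw [← Real.mul_rpow (by norm_num) hδ.le]
        exact Real.rpow_le_rpow hρ0.le hρ4 hs.le
      have h2 : δ ^ (-(s + α)) * δ ^ s = δ ^ (-α) := by
        rw [← Real.rpow_add hδ]
        congr 1
        ring
      have hterm1 : (CP * r ^ α * δ ^ (-(s + α))) * (Λ * ρ ^ s)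
          ≤ CP * Λ * 4 ^ s * (r ^ α * δ ^ (-α)) := by
        have hnn2 : (0:ℝ) ≤ CP * r ^ α * δ ^ (-(s + α)) :=
          mul_nonneg (mul_nonneg hCP0.le (Real.rpow_nonneg hr0.le _))
            (Real.rpow_nonneg hδ.le _)
        calc (CP * r ^ α * δ ^ (-(s + α))) * (Λ * ρ ^ s)
            ≤ (CP * r ^ α * δ ^ (-(s + α))) * (Λ * (4 ^ s * δ ^ s)) := by
              exact mul_le_mul_of_nonneg_left
                (mul_le_mul_of_nonneg_left h1 hΛ.le) hnn2
          _ = CP * Λ * 4 ^ s * (r ^ α * (δ ^ (-(s + α)) * δ ^ s)) := by ring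
          _ = CP * Λ * 4 ^ s * (r ^ α * δ ^ (-α)) := by rw [h2]
      have hterm2 : (CP * 2 ^ (s + α) * r ^ α) * (Λ * 2 ^ s / (1 - 2 ^ (-α)) * δ ^ (-α))
          = CP * 2 ^ (s + α) * Λ * Q * (r ^ α * δ ^ (-α)) := by
        rw [hQdef]
        ring
      rw [hX, hterm2, hC1def]
      nlinarith [hterm1, mul_nonneg (mul_nonneg hΛ.le hQ0.le) hXnn,
        mul_nonneg hΛ.le hXnn]
    calc ∫⁻ x, ENNReal.ofReal
          ‖stmt7Kd s α K δ (x - y) - stmt7Kd s α K δ (x - y')‖ ∂μ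
        ≤ ∫⁻ x, (g1 x + g4 x) ∂μ := lintegral_mono hclaim
      _ = (∫⁻ x, g1 x ∂μ) + ∫⁻ x, g4 x ∂μ := lintegral_add_left hmg1 _
      _ ≤ ENNReal.ofReal ((CP * r ^ α * δ ^ (-(s + α))) * (Λ * ρ ^ s))
          + ENNReal.ofReal ((CP * 2 ^ (s + α) * r ^ α)
              * (Λ * 2 ^ s / (1 - 2 ^ (-α)) * δ ^ (-α))) := add_le_add hg1int hg4int
      _ = ENNReal.ofReal ((CP * r ^ α * δ ^ (-(s + α))) * (Λ * ρ ^ s)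
          + (CP * 2 ^ (s + α) * r ^ α) * (Λ * 2 ^ s / (1 - 2 ^ (-α)) * δ ^ (-α))) := by
          rw [← ENNReal.ofReal_add
            (mul_nonneg (mul_nonneg (mul_nonneg hCP0.le (Real.rpow_nonneg hr0.le _))
              (Real.rpow_nonneg hδ.le _)) (mul_nonneg hΛ.le (Real.rpow_nonneg hρ0.le _)))
            (mul_nonneg hg4c (mul_nonneg (div_nonneg (by positivity) hq1.le)
              (Real.rpow_nonneg hδ.le _)))]
      _ ≤ ENNReal.ofReal (C₁ * r ^ α / δ ^ α) := ENNReal.ofReal_le_ofReal hrealA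
  · -- Case B : δ < r
    push_neg at hcase
    set g1 : EuclideanSpace ℝ (Fin d) → ℝ≥0∞ := (ball y δ).indicator
        (fun _ => ENNReal.ofReal (δ ^ (-s))) with hg1def
    set g2 : EuclideanSpace ℝ (Fin d) → ℝ≥0∞ := (ball y' δ).indicator
        (fun _ => ENNReal.ofReal (δ ^ (-s))) with hg2def
    set g3 : EuclideanSpace ℝ (Fin d) → ℝ≥0∞ := {x | δ ≤ ‖x - y‖}.indicator
        (fun x => ENNReal.ofReal (ρ' ^ α * ‖x - y‖ ^ (-(s + α)))) with hg3def
    set g3' : EuclideanSpace ℝ (Fin d) → ℝ≥0∞ := {x | δ ≤ ‖x - y'‖}.indicator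
        (fun x => ENNReal.ofReal (ρ' ^ α * ‖x - y'‖ ^ (-(s + α)))) with hg3'def
    have hKd_le : ∀ z : EuclideanSpace ℝ (Fin d), ∀ x, ‖x - z‖ < ρ' →
        ENNReal.ofReal ‖stmt7Kd s α K δ (x - z)‖
          ≤ (ball z δ).indicator (fun _ => ENNReal.ofReal (δ ^ (-s))) x
            + {x | δ ≤ ‖x - z‖}.indicator
                (fun x => ENNReal.ofReal (ρ' ^ α * ‖x - z‖ ^ (-(s + α)))) x := by
      intro z x hx
      have hbd := stmt7Kd_bd s α K hs hα0 hKbd δ hδ (x - z)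
      by_cases hxδ : ‖x - z‖ < δ
      · have h1 : (ball z δ).indicator
            (fun _ => ENNReal.ofReal (δ ^ (-s))) x = ENNReal.ofReal (δ ^ (-s)) := by
          rw [Set.indicator_of_mem (by rwa [mem_ball, dist_eq_norm])]
        rw [h1]
        refine le_trans ?_ (self_le_add_right _ _)
        refine ENNReal.ofReal_le_ofReal (le_trans hbd (le_of_eq ?_))
        rw [max_eq_left hxδ.le]
      · push_neg at hxδ
        have hn0 : (0:ℝ) < ‖x - z‖ := lt_of_lt_of_le hδ hxδ
        have h1 : {x : EuclideanSpace ℝ (Fin d) | δ ≤ ‖x - z‖}.indicator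
            (fun x => ENNReal.ofReal (ρ' ^ α * ‖x - z‖ ^ (-(s + α)))) x
            = ENNReal.ofReal (ρ' ^ α * ‖x - z‖ ^ (-(s + α))) := by
          rw [Set.indicator_of_mem
            (show x ∈ {x : EuclideanSpace ℝ (Fin d) | δ ≤ ‖x - z‖} from hxδ)]
        rw [h1]
        refine le_trans ?_ (self_le_add_left _ _)
        refine ENNReal.ofReal_le_ofReal (le_trans hbd ?_)
        rw [max_eq_right hxδ]
        have e1 : ‖x - z‖ ^ (-s) = ‖x - z‖ ^ α * ‖x - z‖ ^ (-(s + α)) := by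
          rw [← Real.rpow_add hn0]
          congr 1
          ring
        rw [e1]
        exact mul_le_mul_of_nonneg_right
          (Real.rpow_le_rpow hn0.le hx.le hα0.le)
          (Real.rpow_nonneg hn0.le _)
    have hclaim : ∀ x, ENNReal.ofReal
        ‖stmt7Kd s α K δ (x - y) - stmt7Kd s α K δ (x - y')‖
          ≤ ((g1 x + g3 x) + (g2 x + g3' x)) + g4 x := by
      intro x
      by_cases hx : ‖x - y‖ < ρ
      · have hv : ‖x - y'‖ < ρ' := by
          have htri : ‖x - y'‖ ≤ ‖x - y‖ + r := by
            calc ‖x - y'‖ = ‖(x - y) + (y - y')‖ := by rw [sub_add_sub_cancel]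
              _ ≤ ‖x - y‖ + ‖y - y'‖ := norm_add_le _ _
              _ = ‖x - y‖ + r := by rw [← hrdef]
          rw [hρ'def]
          linarith
        have h1 := hKd_le y x (lt_of_lt_of_le hx hρρ')
        have h2 := hKd_le y' x hv
        calc ENNReal.ofReal ‖stmt7Kd s α K δ (x - y) - stmt7Kd s α K δ (x - y')‖
            ≤ ENNReal.ofReal (‖stmt7Kd s α K δ (x - y)‖ + ‖stmt7Kd s α K δ (x - y')‖) :=
              ENNReal.ofReal_le_ofReal (norm_sub_le _ _)
          _ = ENNReal.ofReal ‖stmt7Kd s α K δ (x - y)‖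
              + ENNReal.ofReal ‖stmt7Kd s α K δ (x - y')‖ :=
              ENNReal.ofReal_add (norm_nonneg _) (norm_nonneg _)
          _ ≤ (g1 x + g3 x) + (g2 x + g3' x) := add_le_add h1 h2
          _ ≤ ((g1 x + g3 x) + (g2 x + g3' x)) + g4 x := self_le_add_right _ _
      · push_neg at hx
        have h1 : g4 x = ENNReal.ofReal
            (CP * 2 ^ (s + α) * r ^ α * ‖x - y‖ ^ (-(s + α))) := by
          rw [hg4def, Set.indicator_of_mem
            (show x ∈ {x : EuclideanSpace ℝ (Fin d) | ρ ≤ ‖x - y‖} from hx)]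
        calc ENNReal.ofReal ‖stmt7Kd s α K δ (x - y) - stmt7Kd s α K δ (x - y')‖
            ≤ g4 x := by rw [h1]; exact ENNReal.ofReal_le_ofReal (houter x hx)
          _ ≤ ((g1 x + g3 x) + (g2 x + g3' x)) + g4 x := self_le_add_left _ _
    have hmg1 : Measurable g1 := measurable_const.indicator measurableSet_ball
    have hmg2 : Measurable g2 := measurable_const.indicator measurableSet_ball
    have hmg3 : Measurable g3 := by
      rw [hg3def]
      exact ((measurable_const.mul
        (((continuous_id.sub continuous_const).norm.measurable).pow
          measurable_const)).ennreal_ofReal).indicator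
        (measurableSet_le measurable_const
          ((continuous_id.sub continuous_const).norm.measurable))
    have hmg3' : Measurable g3' := by
      rw [hg3'def]
      exact ((measurable_const.mul
        (((continuous_id.sub continuous_const).norm.measurable).pow
          measurable_const)).ennreal_ofReal).indicator
        (measurableSet_le measurable_const
          ((continuous_id.sub continuous_const).norm.measurable))
    have hρ'α : (0:ℝ) ≤ ρ' ^ α := Real.rpow_nonneg hρ'0.le _
    have hg1int : ∫⁻ x, g1 x ∂μ ≤ ENNReal.ofReal (δ ^ (-s) * (Λ * δ ^ s)) := by
      rw [hg1def]
      exact stmt7_intC Λ s hs hΛ μ hμ _ δ (Real.rpow_nonneg hδ.le _) hδ y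
    have hg2int : ∫⁻ x, g2 x ∂μ ≤ ENNReal.ofReal (δ ^ (-s) * (Λ * δ ^ s)) := by
      rw [hg2def]
      exact stmt7_intC Λ s hs hΛ μ hμ _ δ (Real.rpow_nonneg hδ.le _) hδ y'
    have hg3int : ∫⁻ x, g3 x ∂μ
        ≤ ENNReal.ofReal (ρ' ^ α * (Λ * 2 ^ s / (1 - 2 ^ (-α)) * δ ^ (-α))) := by
      rw [hg3def]
      exact stmt7_intB Λ s α hs hα0 hΛ μ hμ _ δ hρ'α hδ y
    have hg3'int : ∫⁻ x, g3' x ∂μ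
        ≤ ENNReal.ofReal (ρ' ^ α * (Λ * 2 ^ s / (1 - 2 ^ (-α)) * δ ^ (-α))) := by
      rw [hg3'def]
      exact stmt7_intB Λ s α hs hα0 hΛ μ hμ _ δ hρ'α hδ y'
    have hrealB : (δ ^ (-s) * (Λ * δ ^ s) + ρ' ^ α * (Λ * 2 ^ s / (1 - 2 ^ (-α)) * δ ^ (-α))
        + (δ ^ (-s) * (Λ * δ ^ s) + ρ' ^ α * (Λ * 2 ^ s / (1 - 2 ^ (-α)) * δ ^ (-α))))
        + (CP * 2 ^ (s + α) * r ^ α) * (Λ * 2 ^ s / (1 - 2 ^ (-α)) * δ ^ (-α))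
        ≤ C₁ * r ^ α / δ ^ α := by
      have hδα : (0:ℝ) < δ ^ α := Real.rpow_pos_of_pos hδ _
      have hδs : (0:ℝ) < δ ^ s := Real.rpow_pos_of_pos hδ _
      have hX : C₁ * r ^ α / δ ^ α = C₁ * (r ^ α * δ ^ (-α)) := by
        rw [Real.rpow_neg hδ.le]
        ring
      have hXnn : (0:ℝ) ≤ r ^ α * δ ^ (-α) :=
        mul_nonneg (Real.rpow_nonneg hr0.le _) (Real.rpow_nonneg hδ.le _)
      have hX1 : (1:ℝ) ≤ r ^ α * δ ^ (-α) := by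
        have h5 : δ ^ α ≤ r ^ α := Real.rpow_le_rpow hδ.le hcase.le hα0.le
        rw [Real.rpow_neg hδ.le, ← div_eq_mul_inv, le_div_iff₀ hδα, one_mul]
        exact h5
      have e1 : δ ^ (-s) * (Λ * δ ^ s) = Λ := by
        rw [Real.rpow_neg hδ.le]
        field_simp
      have hρ'5 : ρ' ≤ 5 * r := by rw [hρ'def, hρdef]; linarith
      have h5 : ρ' ^ α ≤ 5 * r ^ α := by
        calc ρ' ^ α ≤ (5 * r) ^ α := Real.rpow_le_rpow hρ'0.le hρ'5 hα0.le
          _ = 5 ^ α * r ^ α := Real.mul_rpow (by norm_num) hr0.le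
          _ ≤ 5 * r ^ α := by
            have h6 : (5:ℝ) ^ α ≤ 5 := by
              calc (5:ℝ) ^ α ≤ (5:ℝ) ^ (1:ℝ) :=
                Real.rpow_le_rpow_of_exponent_le (by norm_num) hα1
              _ = 5 := Real.rpow_one 5
            have h7 : (0:ℝ) ≤ r ^ α := Real.rpow_nonneg hr0.le _
            nlinarith
      have hcoef : (0:ℝ) ≤ Λ * 2 ^ s / (1 - 2 ^ (-α)) * δ ^ (-α) := by positivity
      have ht2 : ρ' ^ α * (Λ * 2 ^ s / (1 - 2 ^ (-α)) * δ ^ (-α))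
          ≤ 5 * Λ * Q * (r ^ α * δ ^ (-α)) := by
        have h8 := mul_le_mul_of_nonneg_right h5 hcoef
        refine le_trans h8 (le_of_eq ?_)
        rw [hQdef]
        ring
      have ht3 : (CP * 2 ^ (s + α) * r ^ α) * (Λ * 2 ^ s / (1 - 2 ^ (-α)) * δ ^ (-α))
          = CP * 2 ^ (s + α) * Λ * Q * (r ^ α * δ ^ (-α)) := by
        rw [hQdef]
        ring
      rw [hX, e1, ht3, hC1def]
      nlinarith [ht2, mul_nonneg (mul_nonneg (mul_nonneg hΛ.le hCP0.le) h4s.le) hXnn,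
        mul_nonneg hΛ.le (sub_nonneg.2 hX1),
        mul_nonneg (mul_nonneg hΛ.le hQ0.le) hXnn]
    calc ∫⁻ x, ENNReal.ofReal
          ‖stmt7Kd s α K δ (x - y) - stmt7Kd s α K δ (x - y')‖ ∂μ
        ≤ ∫⁻ x, (((g1 x + g3 x) + (g2 x + g3' x)) + g4 x) ∂μ := lintegral_mono hclaim
      _ = (∫⁻ x, ((g1 x + g3 x) + (g2 x + g3' x)) ∂μ) + ∫⁻ x, g4 x ∂μ :=
          lintegral_add_left ((hmg1.add hmg3).add (hmg2.add hmg3')) _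
      _ = ((∫⁻ x, (g1 x + g3 x) ∂μ) + ∫⁻ x, (g2 x + g3' x) ∂μ) + ∫⁻ x, g4 x ∂μ := by
          exact congrArg (· + ∫⁻ x, g4 x ∂μ)
            (lintegral_add_left (hmg1.add hmg3) (fun x => g2 x + g3' x))
      _ = (((∫⁻ x, g1 x ∂μ) + ∫⁻ x, g3 x ∂μ)
          + ((∫⁻ x, g2 x ∂μ) + ∫⁻ x, g3' x ∂μ)) + ∫⁻ x, g4 x ∂μ := by
          rw [lintegral_add_left hmg1, lintegral_add_left hmg2]
      _ ≤ ((ENNReal.ofReal (δ ^ (-s) * (Λ * δ ^ s))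
            + ENNReal.ofReal (ρ' ^ α * (Λ * 2 ^ s / (1 - 2 ^ (-α)) * δ ^ (-α))))
          + (ENNReal.ofReal (δ ^ (-s) * (Λ * δ ^ s))
            + ENNReal.ofReal (ρ' ^ α * (Λ * 2 ^ s / (1 - 2 ^ (-α)) * δ ^ (-α)))))
          + ENNReal.ofReal ((CP * 2 ^ (s + α) * r ^ α)
              * (Λ * 2 ^ s / (1 - 2 ^ (-α)) * δ ^ (-α))) :=
          add_le_add (add_le_add (add_le_add hg1int hg3int)
            (add_le_add hg2int hg3'int)) hg4int
      _ = ENNReal.ofReal ((δ ^ (-s) * (Λ * δ ^ s)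
            + ρ' ^ α * (Λ * 2 ^ s / (1 - 2 ^ (-α)) * δ ^ (-α))
          + (δ ^ (-s) * (Λ * δ ^ s)
            + ρ' ^ α * (Λ * 2 ^ s / (1 - 2 ^ (-α)) * δ ^ (-α))))
          + (CP * 2 ^ (s + α) * r ^ α) * (Λ * 2 ^ s / (1 - 2 ^ (-α)) * δ ^ (-α))) := by
          have hB1 : (0:ℝ) ≤ δ ^ (-s) * (Λ * δ ^ s) :=
            mul_nonneg (Real.rpow_nonneg hδ.le _)
              (mul_nonneg hΛ.le (Real.rpow_nonneg hδ.le _))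
          have hB2 : (0:ℝ) ≤ ρ' ^ α * (Λ * 2 ^ s / (1 - 2 ^ (-α)) * δ ^ (-α)) :=
            mul_nonneg (Real.rpow_nonneg hρ'0.le _)
              (mul_nonneg (div_nonneg (by positivity) hq1.le)
                (Real.rpow_nonneg hδ.le _))
          have hB3 : (0:ℝ) ≤ (CP * 2 ^ (s + α) * r ^ α)
              * (Λ * 2 ^ s / (1 - 2 ^ (-α)) * δ ^ (-α)) :=
            mul_nonneg hg4c (mul_nonneg (div_nonneg (by positivity) hq1.le)
              (Real.rpow_nonneg hδ.le _))
          rw [← ENNReal.ofReal_add hB1 hB2,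
            ← ENNReal.ofReal_add (add_nonneg hB1 hB2) (add_nonneg hB1 hB2),
            ← ENNReal.ofReal_add (add_nonneg (add_nonneg hB1 hB2) (add_nonneg hB1 hB2)) hB3]
      _ ≤ ENNReal.ofReal (C₁ * r ^ α / δ ^ α) := ENNReal.ofReal_le_ofReal hrealB
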